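/- Let d_a, d_b ∈ ℝ and C, ρ > 0. Let (a_j)_{j∈ℕ}, (b_j)_{j∈ℕ} be sequences of functions from [1, ∞) to ℂ and a, b : [1, ∞) → ℂ be functions such that for all j ∈ ℕ and r ≥ 1: |a_j(r)| ≤ C ρ^j j! r^{d_a − j} and |b_j(r)| ≤ C ρ^j j! r^{d_b − j}, and for every natural number N and r ≥ 1: |a(r) − Σ_{j<N} a_j(r)| ≤ C ρ^N N! r^{d_a − N} and |b(r) − Σ_{j<N} b_j(r)| ≤ C ρ^N N! r^{d_b − N}. Then there exist C' > 0 and ρ' > 0 (depending only on C, ρ, d_a, d_b) such that for every natural number N and every r ≥ 1: |a(r) · b(r) − Σ_{k<N} Σ_{j=0}^{k} a_j(r) b_{k−j}(r)| ≤ C' (ρ')^N N! r^{d_a + d_b − N}. -/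

import Mathlib

open Finset

lemma cauchy_sum_eq' (A B : ℕ → ℂ) (N : ℕ) :
    ∑ k ∈ range N, ∑ j ∈ range (k + 1), A j * B (k - j)
      = ∑ j ∈ range N, A j * ∑ l ∈ range (N - j), B l := by
  induction N with
  | zero => simp
  | succ N ih =>
    rw [Finset.sum_range_succ, ih]
    have h1 : ∑ j ∈ range (N + 1), A j * ∑ l ∈ range (N + 1 - j), B l
        = ∑ j ∈ range N, A j * ∑ l ∈ range (N + 1 - j), B l + A N * B 0 := by
      rw [Finset.sum_range_succ]; simp
    rw [h1]
    have h2 : ∀ j ∈ range N, A j * ∑ l ∈ range (N + 1 - j), B l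
        = A j * ∑ l ∈ range (N - j), B l + A j * B (N - j) := by
      intro j hj
      have hj' : j < N := mem_range.mp hj
      have : N + 1 - j = (N - j) + 1 := by omega
      rw [this, Finset.sum_range_succ, mul_add]
    rw [Finset.sum_congr rfl h2, Finset.sum_add_distrib,
      Finset.sum_range_succ, Nat.sub_self]
    ring

/-- **Products of realisations realise the Cauchy product**: if `a` and `b` realise the
formal analytic amplitudes `(a_j)` and `(b_j)` of degrees `d_a` and `d_b` with factorial
remainder control, then `a·b` realises the Cauchy product `(Σ_{j≤k} a_j b_{k−j})_k`, with
factorial remainder control at every order. -/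
theorem stmt_8 (da db C ρ : ℝ) (hC : 0 < C) (hρ : 0 < ρ)
    (A B : ℕ → ℝ → ℂ) (a b : ℝ → ℂ)
    (hA : ∀ (j : ℕ) (r : ℝ), 1 ≤ r →
      ‖A j r‖ ≤ C * ρ ^ j * (j.factorial : ℝ) * r ^ (da - (j : ℝ)))
    (hB : ∀ (j : ℕ) (r : ℝ), 1 ≤ r →
      ‖B j r‖ ≤ C * ρ ^ j * (j.factorial : ℝ) * r ^ (db - (j : ℝ)))
    (ha : ∀ (N : ℕ) (r : ℝ), 1 ≤ r →
      ‖a r - ∑ j ∈ Finset.range N, A j r‖ ≤ C * ρ ^ N * (N.factorial : ℝ) * r ^ (da - (N : ℝ)))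
    (hb : ∀ (N : ℕ) (r : ℝ), 1 ≤ r →
      ‖b r - ∑ j ∈ Finset.range N, B j r‖ ≤ C * ρ ^ N * (N.factorial : ℝ) * r ^ (db - (N : ℝ))) :
    ∃ C' : ℝ, 0 < C' ∧ ∃ ρ' : ℝ, 0 < ρ' ∧
      ∀ (N : ℕ) (r : ℝ), 1 ≤ r →
        ‖a r * b r - ∑ k ∈ Finset.range N, ∑ j ∈ Finset.range (k + 1), A j r * B (k - j) r‖
          ≤ C' * ρ' ^ N * (N.factorial : ℝ) * r ^ (da + db - (N : ℝ)) := by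
  refine ⟨2 * C ^ 2, by positivity, 2 * ρ, by positivity, ?_⟩
  intro N r hr
  have hr0 : (0 : ℝ) < r := lt_of_lt_of_le one_pos hr
  have hbb : ‖b r‖ ≤ C * r ^ db := by simpa using hb 0 r hr
  have key : a r * b r - ∑ k ∈ range N, ∑ j ∈ range (k + 1), A j r * B (k - j) r
      = (a r - ∑ j ∈ range N, A j r) * b r
        + ∑ j ∈ range N, A j r * (b r - ∑ l ∈ range (N - j), B l r) := by
    rw [cauchy_sum_eq' (fun j => A j r) (fun l => B l r) N]
    simp only [mul_sub, Finset.sum_sub_distrib, ← Finset.sum_mul]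
    ring
  rw [key]
  have E : da - (N : ℝ) + db = da + db - N := by ring
  have hT1 : ‖(a r - ∑ j ∈ range N, A j r) * b r‖
      ≤ C ^ 2 * ρ ^ N * (N.factorial : ℝ) * r ^ (da + db - (N : ℝ)) := by
    rw [norm_mul]
    calc ‖a r - ∑ j ∈ range N, A j r‖ * ‖b r‖
        ≤ (C * ρ ^ N * (N.factorial : ℝ) * r ^ (da - (N : ℝ))) * (C * r ^ db) :=
          mul_le_mul (ha N r hr) hbb (norm_nonneg _) (by positivity)
      _ = C ^ 2 * ρ ^ N * (N.factorial : ℝ) * (r ^ (da - (N : ℝ)) * r ^ db) := by ring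
      _ = C ^ 2 * ρ ^ N * (N.factorial : ℝ) * r ^ (da + db - (N : ℝ)) := by
          rw [← Real.rpow_add hr0, E]
  have hterm : ∀ j ∈ range N,
      ‖A j r * (b r - ∑ l ∈ range (N - j), B l r)‖
        ≤ C ^ 2 * ρ ^ N * (N.factorial : ℝ) * r ^ (da + db - (N : ℝ)) := by
    intro j hj
    have hjN : j ≤ N := le_of_lt (mem_range.mp hj)
    rw [norm_mul]
    have hfac : (j.factorial : ℝ) * ((N - j).factorial : ℝ) ≤ (N.factorial : ℝ) := by
      exact_mod_cast Nat.le_of_dvd N.factorial_pos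
        (Nat.factorial_mul_factorial_dvd_factorial hjN)
    calc ‖A j r‖ * ‖b r - ∑ l ∈ range (N - j), B l r‖
        ≤ (C * ρ ^ j * (j.factorial : ℝ) * r ^ (da - (j : ℝ)))
            * (C * ρ ^ (N - j) * ((N - j).factorial : ℝ) * r ^ (db - ((N - j : ℕ) : ℝ))) :=
          mul_le_mul (hA j r hr) (hb (N - j) r hr) (norm_nonneg _) (by positivity)
      _ = C ^ 2 * ρ ^ N * ((j.factorial : ℝ) * ((N - j).factorial : ℝ))
            * r ^ (da + db - (N : ℝ)) := by
          have hcast : ((N - j : ℕ) : ℝ) = (N : ℝ) - (j : ℝ) := by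
            push_cast [Nat.cast_sub hjN]; ring
          have hpow : ρ ^ j * ρ ^ (N - j) = ρ ^ N := by
            rw [← pow_add]; congr 1; omega
          have hr2 : r ^ (da - (j : ℝ)) * r ^ (db - ((N - j : ℕ) : ℝ))
              = r ^ (da + db - (N : ℝ)) := by
            rw [← Real.rpow_add hr0, hcast]; ring_nf
          calc C * ρ ^ j * (j.factorial : ℝ) * r ^ (da - (j : ℝ))
                * (C * ρ ^ (N - j) * ((N - j).factorial : ℝ) * r ^ (db - ((N - j : ℕ) : ℝ)))
              = C ^ 2 * (ρ ^ j * ρ ^ (N - j)) * ((j.factorial : ℝ) * ((N - j).factorial : ℝ))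
                * (r ^ (da - (j : ℝ)) * r ^ (db - ((N - j : ℕ) : ℝ))) := by ring
            _ = C ^ 2 * ρ ^ N * ((j.factorial : ℝ) * ((N - j).factorial : ℝ))
                * r ^ (da + db - (N : ℝ)) := by rw [hpow, hr2]
      _ ≤ C ^ 2 * ρ ^ N * (N.factorial : ℝ) * r ^ (da + db - (N : ℝ)) := by
          have : (0:ℝ) ≤ r ^ (da + db - (N : ℝ)) := le_of_lt (Real.rpow_pos_of_pos hr0 _)
          have h1 : (0:ℝ) ≤ C ^ 2 * ρ ^ N := by positivity
          nlinarith [mul_le_mul_of_nonneg_left hfac h1]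
  have hT2 : ‖∑ j ∈ range N, A j r * (b r - ∑ l ∈ range (N - j), B l r)‖
      ≤ N * (C ^ 2 * ρ ^ N * (N.factorial : ℝ) * r ^ (da + db - (N : ℝ))) := by
    calc ‖∑ j ∈ range N, A j r * (b r - ∑ l ∈ range (N - j), B l r)‖
        ≤ ∑ j ∈ range N, ‖A j r * (b r - ∑ l ∈ range (N - j), B l r)‖ := norm_sum_le _ _
      _ ≤ ∑ j ∈ range N, C ^ 2 * ρ ^ N * (N.factorial : ℝ) * r ^ (da + db - (N : ℝ)) :=
          Finset.sum_le_sum hterm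
      _ = N * (C ^ 2 * ρ ^ N * (N.factorial : ℝ) * r ^ (da + db - (N : ℝ))) := by
          rw [Finset.sum_const, card_range, nsmul_eq_mul]
  calc ‖(a r - ∑ j ∈ range N, A j r) * b r
        + ∑ j ∈ range N, A j r * (b r - ∑ l ∈ range (N - j), B l r)‖
      ≤ ‖(a r - ∑ j ∈ range N, A j r) * b r‖
        + ‖∑ j ∈ range N, A j r * (b r - ∑ l ∈ range (N - j), B l r)‖ := norm_add_le _ _
    _ ≤ (1 + N) * (C ^ 2 * ρ ^ N * (N.factorial : ℝ) * r ^ (da + db - (N : ℝ))) := by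
        rw [add_mul, one_mul]; exact add_le_add hT1 hT2
    _ ≤ 2 * C ^ 2 * (2 * ρ) ^ N * (N.factorial : ℝ) * r ^ (da + db - (N : ℝ)) := by
        have hP : (0:ℝ) ≤ C ^ 2 * ρ ^ N * (N.factorial : ℝ) * r ^ (da + db - (N : ℝ)) := by
          positivity
        have h2N : (1 + (N:ℝ)) ≤ 2 * 2 ^ N := by
          have : N < 2 ^ N := Nat.lt_two_pow_self
          have : (N:ℝ) < 2 ^ N := by exact_mod_cast this
          have h1 : (1:ℝ) ≤ 2 ^ N := one_le_pow₀ (by norm_num)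
          linarith
        have : (1 + (N:ℝ)) * (C ^ 2 * ρ ^ N * (N.factorial : ℝ) * r ^ (da + db - (N : ℝ)))
            ≤ (2 * 2 ^ N) * (C ^ 2 * ρ ^ N * (N.factorial : ℝ) * r ^ (da + db - (N : ℝ))) :=
          mul_le_mul_of_nonneg_right h2N hP
        calc (1 + (N:ℝ)) * (C ^ 2 * ρ ^ N * (N.factorial : ℝ) * r ^ (da + db - (N : ℝ)))
            ≤ (2 * 2 ^ N) * (C ^ 2 * ρ ^ N * (N.factorial : ℝ) * r ^ (da + db - (N : ℝ))) := this
          _ = 2 * C ^ 2 * (2 * ρ) ^ N * (N.factorial : ℝ) * r ^ (da + db - (N : ℝ)) := by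
              rw [mul_pow]; ring
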